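/- Let N ∈ ℕ, let α_{l,m} ∈ ℝ for l = 0,…,N and m = 0,…,M_l, and let γ_r ∈ ℝ for r = 0,…,R. Let b : ℕ → ℝ be a sequence such that the formal power series z(t) = Σ_{k≥0} b_k t^k satisfies a_N(t) z^{(N)}(t) + … + a_1(t) z'(t) + a_0(t) z(t) + c_0(t) = 0, where a_l(t) = Σ_{m=0}^{M_l} α_{l,m} t^m and c_0(t) = Σ_{r=0}^{R} γ_r t^r; equivalently, for every k ∈ ℕ: Σ_{l=0}^{N} Σ_{m=0}^{min(M_l,k)} α_{l,m} · ((k−m+l)!/(k−m)!) · b_{k−m+l} + γ_k = 0 (with γ_k := 0 for k > R). Define z : ℕ → ℝ by z(n) = Σ_{k=0}^{n} b_k · n!/(n−k)!. Then for every n ∈ ℕ: Σ_{l=0}^{N} [ α_{l,0} · (Δ^l z)(n) + Σ_{m=1}^{M_l} α_{l,m} · Σ_{k=m}^{n} Σ_{j=0}^{k−m} (−1)^{k−j−m} · (n!/(j!·(k−m−j)!·(n−k)!)) · (Δ^l z)(j) ] + Σ_{r=0}^{min(R,n)} γ_r · n!/(n−r)! = 0. -/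

import Mathlib

/-- The forward difference operator acting on sequences. -/
def fwdDiffSeq (u : ℕ → ℝ) : ℕ → ℝ := fun n => u (n + 1) - u n

open Finset

noncomputable def S (c : ℕ → ℝ) (n : ℕ) : ℝ :=
  ∑ k ∈ range (n + 1), c k * (Nat.descFactorial n k : ℝ)

lemma desc_diff (n k : ℕ) :
    ((Nat.descFactorial (n+1) k : ℝ)) - (Nat.descFactorial n k : ℝ)
      = (k : ℝ) * (Nat.descFactorial n (k-1) : ℝ) := by
  cases k with
  | zero => simp
  | succ k =>
    rw [Nat.succ_descFactorial_succ, Nat.descFactorial_succ]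
    rcases le_or_gt k n with h | h
    · push_cast [h]
      ring
    · have h0 : Nat.descFactorial n k = 0 := Nat.descFactorial_of_lt h
      simp [h0]

lemma fwd_S (c : ℕ → ℝ) (n : ℕ) :
    fwdDiffSeq (S c) n = S (fun j => ((j : ℝ) + 1) * c (j + 1)) n := by
  show S c (n+1) - S c n = _
  unfold S
  have h1 : ∑ k ∈ range (n+1+1), c k * (Nat.descFactorial n k : ℝ)
      = ∑ k ∈ range (n+1), c k * (Nat.descFactorial n k : ℝ) := by
    rw [Finset.sum_range_succ]
    have h : Nat.descFactorial n (n+1) = 0 := Nat.descFactorial_of_lt (Nat.lt_succ_self n)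
    rw [h]; push_cast; ring
  rw [← h1, ← Finset.sum_sub_distrib]
  have h2 : ∀ k, c k * (Nat.descFactorial (n+1) k : ℝ) - c k * (Nat.descFactorial n k : ℝ)
      = c k * ((k:ℝ) * (Nat.descFactorial n (k-1) : ℝ)) := by
    intro k
    rw [← mul_sub, desc_diff]
  simp_rw [h2]
  rw [Finset.sum_range_succ']
  simp only [Nat.cast_zero, zero_mul, mul_zero, add_zero]
  apply Finset.sum_congr rfl
  intro j _
  push_cast
  ring

lemma iter_S (l : ℕ) : ∀ (c : ℕ → ℝ) (n : ℕ),
    (fwdDiffSeq^[l] (S c)) n = S (fun j => (Nat.descFactorial (j+l) l : ℝ) * c (j+l)) n := by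
  induction l with
  | zero => intro c n; simp [S]
  | succ l ih =>
    intro c n
    rw [Function.iterate_succ_apply]
    have : fwdDiffSeq (S c) = S (fun j => ((j : ℝ) + 1) * c (j + 1)) :=
      funext (fwd_S c)
    rw [this, ih]
    unfold S
    apply Finset.sum_congr rfl
    intro j _
    have : Nat.descFactorial (j + (l+1)) (l+1) = (j + l + 1) * Nat.descFactorial (j+l) l := by
      show Nat.descFactorial ((j + l) + 1) (l+1) = _
      rw [Nat.succ_descFactorial_succ]
    simp only [this]
    push_cast
    ring

lemma alt_sum (q : ℕ) :
    ∑ t ∈ range (q+1), (-1:ℝ)^(q-t) * (Nat.choose q t : ℝ)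
      = if q = 0 then 1 else 0 := by
  have h1 : ∑ t ∈ range (q+1), (-1:ℝ)^(q-t) * (Nat.choose q t : ℝ)
      = ∑ t ∈ range (q+1), (-1:ℝ)^t * (Nat.choose q t : ℝ) := by
    rw [← Finset.sum_range_reflect]
    apply Finset.sum_congr rfl
    intro t ht
    have ht' : t ≤ q := Nat.lt_succ_iff.mp (Finset.mem_range.mp ht)
    rw [Nat.add_sub_cancel, Nat.sub_sub_self ht', Nat.choose_symm ht']
  rw [h1]
  have h2 := Int.alternating_sum_range_choose (n := q)
  have h3 : ((∑ i ∈ range (q + 1), (-1:ℤ) ^ i * q.choose i : ℤ) : ℝ)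
      = ∑ t ∈ range (q+1), (-1:ℝ)^t * (Nat.choose q t : ℝ) := by
    push_cast
    rfl
  rw [← h3, h2]
  split <;> simp

lemma lemA (i p : ℕ) (hip : i ≤ p) :
    ∑ j ∈ range (p+1), (-1:ℝ)^(p-j) *
        ((Nat.descFactorial j i : ℝ) / ((Nat.factorial j : ℝ) * (Nat.factorial (p-j) : ℝ)))
      = if i = p then 1 else 0 := by
  have hsub : Finset.Ico i (p+1) ⊆ range (p+1) := by
    intro x hx; simp only [Finset.mem_Ico] at hx; exact Finset.mem_range.mpr hx.2
  rw [← Finset.sum_subset hsub (by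
    intro x hxr hx
    simp only [Finset.mem_Ico, not_and, not_lt] at hx
    have hxr' : x < p + 1 := Finset.mem_range.mp hxr
    rcases lt_or_ge x i with h | h
    · rw [Nat.descFactorial_of_lt h]; simp
    · exact absurd (hx h) (by omega))]
  rw [Finset.sum_Ico_eq_sum_range]
  have hq : p + 1 - i = (p - i) + 1 := by omega
  rw [hq]
  set q := p - i with hqdef
  have key : ∀ t ∈ range (q+1),
      (-1:ℝ)^(p-(i+t)) * ((Nat.descFactorial (i+t) i : ℝ) /
          ((Nat.factorial (i+t) : ℝ) * (Nat.factorial (p-(i+t)) : ℝ)))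
        = (-1:ℝ)^(q-t) * ((Nat.choose q t : ℝ) / (Nat.factorial q : ℝ)) := by
    intro t ht
    have htq : t ≤ q := Nat.lt_succ_iff.mp (Finset.mem_range.mp ht)
    have hpt : p - (i+t) = q - t := by omega
    rw [hpt]
    congr 1
    have hd : (Nat.factorial t : ℝ) * (Nat.descFactorial (i+t) i : ℝ)
        = (Nat.factorial (i+t) : ℝ) := by
      have := Nat.factorial_mul_descFactorial (n := i+t) (k := i) (Nat.le_add_right i t)
      rw [Nat.add_sub_cancel_left] at this
      exact_mod_cast this
    have hc : (Nat.choose q t : ℝ) * (Nat.factorial t : ℝ) * (Nat.factorial (q-t) : ℝ)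
        = (Nat.factorial q : ℝ) := by
      exact_mod_cast Nat.choose_mul_factorial_mul_factorial htq
    have h1 : (Nat.factorial (i+t) : ℝ) ≠ 0 := Nat.cast_ne_zero.mpr (Nat.factorial_ne_zero _)
    have h2 : (Nat.factorial (q-t) : ℝ) ≠ 0 := Nat.cast_ne_zero.mpr (Nat.factorial_ne_zero _)
    have h3 : (Nat.factorial q : ℝ) ≠ 0 := Nat.cast_ne_zero.mpr (Nat.factorial_ne_zero _)
    rw [div_eq_div_iff (by positivity) (by positivity)]
    linear_combination (Nat.choose q t : ℝ) * (Nat.factorial (q-t) : ℝ) * hd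
      - (Nat.descFactorial (i+t) i : ℝ) * hc
  rw [Finset.sum_congr rfl key]
  have : ∑ t ∈ range (q+1), (-1:ℝ)^(q-t) * ((Nat.choose q t : ℝ) / (Nat.factorial q : ℝ))
      = (∑ t ∈ range (q+1), (-1:ℝ)^(q-t) * (Nat.choose q t : ℝ)) / (Nat.factorial q : ℝ) := by
    rw [Finset.sum_div]
    apply Finset.sum_congr rfl
    intro t _; ring
  rw [this, alt_sum]
  by_cases h : q = 0
  · have : i = p := by omega
    simp [h, this]
  · have : ¬ (i = p) := by omega
    simp [h, this]

lemma core (c : ℕ → ℝ) (p : ℕ) :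
    ∑ j ∈ range (p+1), (-1:ℝ)^(p-j) / ((Nat.factorial j : ℝ) * (Nat.factorial (p-j) : ℝ)) * S c j
      = c p := by
  have hS : ∀ j ∈ range (p+1), S c j
      = ∑ i ∈ range (p+1), c i * (Nat.descFactorial j i : ℝ) := by
    intro j hj
    have hj' : j + 1 ≤ p + 1 := Finset.mem_range.mp hj
    unfold S
    apply Finset.sum_subset (by intro x hx; exact Finset.mem_range.mpr (lt_of_lt_of_le (Finset.mem_range.mp hx) hj'))
    intro x _ hx
    have : j < x := by
      have := Finset.mem_range.not.mp hx; omega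
    rw [Nat.descFactorial_of_lt this]; simp
  calc ∑ j ∈ range (p+1), (-1:ℝ)^(p-j) / ((Nat.factorial j : ℝ) * (Nat.factorial (p-j) : ℝ)) * S c j
      = ∑ j ∈ range (p+1), ∑ i ∈ range (p+1),
          (-1:ℝ)^(p-j) / ((Nat.factorial j : ℝ) * (Nat.factorial (p-j) : ℝ)) *
            (c i * (Nat.descFactorial j i : ℝ)) := by
        apply Finset.sum_congr rfl
        intro j hj
        rw [hS j hj, Finset.mul_sum]
    _ = ∑ i ∈ range (p+1), ∑ j ∈ range (p+1),
          (-1:ℝ)^(p-j) / ((Nat.factorial j : ℝ) * (Nat.factorial (p-j) : ℝ)) *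
            (c i * (Nat.descFactorial j i : ℝ)) := Finset.sum_comm
    _ = ∑ i ∈ range (p+1), c i * (∑ j ∈ range (p+1), (-1:ℝ)^(p-j) *
          ((Nat.descFactorial j i : ℝ) / ((Nat.factorial j : ℝ) * (Nat.factorial (p-j) : ℝ)))) := by
        apply Finset.sum_congr rfl
        intro i _
        rw [Finset.mul_sum]
        apply Finset.sum_congr rfl
        intro j _
        ring
    _ = ∑ i ∈ range (p+1), c i * (if i = p then 1 else 0) := by
        apply Finset.sum_congr rfl
        intro i hi
        rw [lemA i p (Nat.lt_succ_iff.mp (Finset.mem_range.mp hi))]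
    _ = c p := by simp

lemma inner_eq (c : ℕ → ℝ) (m k n : ℕ) (hm : m ≤ k) (hk : k ≤ n) :
    ∑ j ∈ range (k-m+1), (-1:ℝ)^(k-j-m) *
        ((Nat.factorial n : ℝ) /
          ((Nat.factorial j : ℝ) * (Nat.factorial (k-m-j) : ℝ) * (Nat.factorial (n-k) : ℝ))) *
        S c j
      = c (k-m) * (Nat.descFactorial n k : ℝ) := by
  have h2 : (Nat.factorial (n-k) : ℝ) ≠ 0 := Nat.cast_ne_zero.mpr (Nat.factorial_ne_zero _)
  have hdesc : (Nat.descFactorial n k : ℝ) = (Nat.factorial n : ℝ) / (Nat.factorial (n-k) : ℝ) := by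
    rw [eq_div_iff h2]
    exact_mod_cast (mul_comm ((n-k).factorial) (n.descFactorial k)) ▸ Nat.factorial_mul_descFactorial hk
  calc ∑ j ∈ range (k-m+1), (-1:ℝ)^(k-j-m) *
        ((Nat.factorial n : ℝ) /
          ((Nat.factorial j : ℝ) * (Nat.factorial (k-m-j) : ℝ) * (Nat.factorial (n-k) : ℝ))) *
        S c j
      = ∑ j ∈ range (k-m+1), ((-1:ℝ)^(k-m-j) /
          ((Nat.factorial j : ℝ) * (Nat.factorial (k-m-j) : ℝ)) * S c j) *
          ((Nat.factorial n : ℝ) / (Nat.factorial (n-k) : ℝ)) := by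
        apply Finset.sum_congr rfl
        intro j _
        rw [Nat.sub_right_comm]
        ring
    _ = (∑ j ∈ range (k-m+1), (-1:ℝ)^(k-m-j) /
          ((Nat.factorial j : ℝ) * (Nat.factorial (k-m-j) : ℝ)) * S c j) *
          ((Nat.factorial n : ℝ) / (Nat.factorial (n-k) : ℝ)) := (Finset.sum_mul _ _ _).symm
    _ = c (k-m) * ((Nat.factorial n : ℝ) / (Nat.factorial (n-k) : ℝ)) := by rw [core]
    _ = c (k-m) * (Nat.descFactorial n k : ℝ) := by rw [hdesc]

lemma icc_filter (n m : ℕ) : Finset.Icc m n = (range (n+1)).filter (fun k => m ≤ k) := by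
  ext x
  simp only [Finset.mem_Icc, Finset.mem_filter, Finset.mem_range, Nat.lt_succ_iff]
  omega

lemma range_min (L k : ℕ) : (range (L+1)).filter (fun m => m ≤ k) = range (min L k + 1) := by
  ext x
  simp only [Finset.mem_filter, Finset.mem_range, Nat.lt_succ_iff, le_min_iff]

lemma sum_split (f : ℕ → ℝ) (Mz : ℕ) :
    ∑ m ∈ range (Mz+1), f m = f 0 + ∑ m ∈ Finset.Icc 1 Mz, f m := by
  rw [Finset.range_eq_Ico, ← Finset.sum_Ico_consecutive f (Nat.zero_le 1) (by omega)]
  simp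
  rw [Finset.Ico_add_one_right_eq_Icc]

/-- Discretization of a linear ODE with polynomial coefficients: the Taylor
coefficients of a formal power series solution yield an exact solution of the
associated nonlocal difference equation on the integer lattice. -/
theorem linear_ode_discretization
    (N R : ℕ) (M : ℕ → ℕ) (α : ℕ → ℕ → ℝ) (γ : ℕ → ℝ) (b : ℕ → ℝ)
    (hode : ∀ k : ℕ,
      (∑ l ∈ Finset.range (N + 1), ∑ m ∈ Finset.range (min (M l) k + 1),
        α l m * (Nat.descFactorial (k - m + l) l : ℝ) * b (k - m + l))
      + (if k ≤ R then γ k else 0) = 0)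
    (z : ℕ → ℝ)
    (hz : ∀ n : ℕ, z n = ∑ k ∈ Finset.range (n + 1), b k * (Nat.descFactorial n k : ℝ)) :
    ∀ n : ℕ,
      (∑ l ∈ Finset.range (N + 1),
        (α l 0 * (fwdDiffSeq^[l] z) n
          + ∑ m ∈ Finset.Icc 1 (M l), α l m *
              ∑ k ∈ Finset.Icc m n, ∑ j ∈ Finset.range (k - m + 1),
                (-1 : ℝ) ^ (k - j - m) *
                  ((Nat.factorial n : ℝ) /
                    ((Nat.factorial j : ℝ) * (Nat.factorial (k - m - j) : ℝ) *
                      (Nat.factorial (n - k) : ℝ))) * (fwdDiffSeq^[l] z) j))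
      + ∑ r ∈ Finset.range (min R n + 1), γ r * (Nat.descFactorial n r : ℝ) = 0 := by
  intro n
  have hzS : z = S b := funext fun j => hz j
  set cl : ℕ → ℕ → ℝ := fun l j => (Nat.descFactorial (j+l) l : ℝ) * b (j+l) with hcl
  have hiter : ∀ l, fwdDiffSeq^[l] z = fun j => S (cl l) j := by
    intro l; funext j; rw [hzS, iter_S]
  -- Step 1: rewrite the main double sum
  have hEl : ∀ l ∈ range (N+1),
      (α l 0 * (fwdDiffSeq^[l] z) n
        + ∑ m ∈ Finset.Icc 1 (M l), α l m *
            ∑ k ∈ Finset.Icc m n, ∑ j ∈ Finset.range (k - m + 1),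
              (-1 : ℝ) ^ (k - j - m) *
                ((Nat.factorial n : ℝ) /
                  ((Nat.factorial j : ℝ) * (Nat.factorial (k - m - j) : ℝ) *
                    (Nat.factorial (n - k) : ℝ))) * (fwdDiffSeq^[l] z) j)
      = ∑ m ∈ range (M l + 1), α l m *
          ∑ k ∈ Finset.Icc m n, cl l (k-m) * (Nat.descFactorial n k : ℝ) := by
    intro l _
    rw [sum_split (fun m => α l m * ∑ k ∈ Finset.Icc m n, cl l (k-m) * (Nat.descFactorial n k : ℝ)) (M l)]
    congr 1
    · -- m = 0 term
      rw [hiter l]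
      congr 1
      have h0 : Finset.Icc 0 n = range (n+1) := by
        rw [icc_filter]
        simp
      rw [h0]
      unfold S
      apply Finset.sum_congr rfl
      intro k _
      rw [Nat.sub_zero]
    · apply Finset.sum_congr rfl
      intro m hm
      congr 1
      apply Finset.sum_congr rfl
      intro k hk
      have hk' := Finset.mem_Icc.mp hk
      rw [hiter l]
      exact inner_eq (cl l) m k n hk'.1 hk'.2
  rw [Finset.sum_congr rfl hEl]
  -- Step 2: rewrite gamma sum
  have hG : ∑ r ∈ Finset.range (min R n + 1), γ r * (Nat.descFactorial n r : ℝ)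
      = ∑ k ∈ range (n+1), (if k ≤ R then γ k else 0) * (Nat.descFactorial n k : ℝ) := by
    rw [show min R n = min n R from min_comm R n, ← range_min n R, Finset.sum_filter]
    apply Finset.sum_congr rfl
    intro k _
    split <;> simp
  rw [hG]
  -- Step 3: swap sums in the main part
  have hmain : ∑ l ∈ range (N+1), ∑ m ∈ range (M l + 1), α l m *
        ∑ k ∈ Finset.Icc m n, cl l (k-m) * (Nat.descFactorial n k : ℝ)
      = ∑ k ∈ range (n+1),
          (∑ l ∈ range (N+1), ∑ m ∈ range (min (M l) k + 1),
            α l m * (Nat.descFactorial (k - m + l) l : ℝ) * b (k - m + l))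
          * (Nat.descFactorial n k : ℝ) := by
    have step1 : ∀ l m, α l m * ∑ k ∈ Finset.Icc m n, cl l (k-m) * (Nat.descFactorial n k : ℝ)
        = ∑ k ∈ range (n+1), if m ≤ k then α l m * (cl l (k-m) * (Nat.descFactorial n k : ℝ)) else 0 := by
      intro l m
      rw [icc_filter n m, Finset.sum_filter, Finset.mul_sum]
      apply Finset.sum_congr rfl
      intro k _
      split <;> simp
    simp_rw [step1]
    calc ∑ l ∈ range (N+1), ∑ m ∈ range (M l + 1), ∑ k ∈ range (n+1),
            (if m ≤ k then α l m * (cl l (k-m) * (Nat.descFactorial n k : ℝ)) else 0)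
        = ∑ l ∈ range (N+1), ∑ k ∈ range (n+1), ∑ m ∈ range (M l + 1),
            (if m ≤ k then α l m * (cl l (k-m) * (Nat.descFactorial n k : ℝ)) else 0) :=
          Finset.sum_congr rfl (fun l _ => Finset.sum_comm)
      _ = ∑ k ∈ range (n+1), ∑ l ∈ range (N+1), ∑ m ∈ range (M l + 1),
            (if m ≤ k then α l m * (cl l (k-m) * (Nat.descFactorial n k : ℝ)) else 0) :=
          Finset.sum_comm
      _ = ∑ k ∈ range (n+1),
            (∑ l ∈ range (N+1), ∑ m ∈ range (min (M l) k + 1),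
              α l m * (Nat.descFactorial (k - m + l) l : ℝ) * b (k - m + l))
            * (Nat.descFactorial n k : ℝ) := by
          apply Finset.sum_congr rfl
          intro k _
          rw [Finset.sum_mul]
          apply Finset.sum_congr rfl
          intro l _
          rw [← Finset.sum_filter, range_min, Finset.sum_mul]
          apply Finset.sum_congr rfl
          intro m _
          simp only [hcl]
          ring
  rw [hmain, ← Finset.sum_add_distrib]
  apply Finset.sum_eq_zero
  intro k _
  rw [← add_mul, hode k, zero_mul]
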